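/- arXiv:1208.3013 — 5 statements merged into one kernel-verified Lean document; each statement's English description precedes it below -/
import Mathlib

section
/- Backward invariance of the bullet regions: there exists ε₀ ∈ (0,1) such that for every ε ∈ (0,ε₀], every integer γ ≥ 1, and every point (x,y) ∈ Δ_ε in the domain of F, if F(x,y) ∈ B_γ then (x,y) ∈ B_γ. -/
open Filter Topology

/-- The Migdal–Kadanoff renormalization map in affine coordinates centered at the
superattracting fixed point `β = [1:0:0]`. -/
noncomputable def Fmk (p : ℂ × ℂ) : ℂ × ℂ :=
  (p.1 ^ 2 * ((p.1 + 2 * p.2) / (1 + p.2 ^ 2)) ^ 2,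
   p.2 ^ 2 * ((1 + (p.1 + p.2) ^ 2) / (1 + p.2 ^ 2)) ^ 2)

/-- The open bidisk `Δ_ε`. -/
def Bidisk (ε : ℝ) : Set (ℂ × ℂ) := {p | ‖p.1‖ < ε ∧ ‖p.2‖ < ε}

/-- The closed bidisk `Δ̄_ε`. -/
def ClosedBidisk (ε : ℝ) : Set (ℂ × ℂ) := {p | ‖p.1‖ ≤ ε ∧ ‖p.2‖ ≤ ε}

/-- The "bullet" region `B_γ = {|x| ≥ |y|^γ}`. -/
def Bullet (γ : ℕ) : Set (ℂ × ℂ) := {p | ‖p.2‖ ^ γ ≤ ‖p.1‖}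

/-- The horizontal cone `K^h = {|y| ≤ |x|}`. -/
def Khor : Set (ℂ × ℂ) := {p | ‖p.2‖ ≤ ‖p.1‖}

/-- The vertical cone `K^v = {|y| ≥ |x|}`. -/
def Kver : Set (ℂ × ℂ) := {p | ‖p.1‖ ≤ ‖p.2‖}

lemma my_nat_le_two_pow (γ : ℕ) (h : 1 ≤ γ) : γ ≤ 2 ^ (γ - 1) := by
  have h2 := Nat.lt_two_pow_self (n := γ - 1)
  calc γ = (γ - 1) + 1 := by omega
    _ ≤ 2 ^ (γ - 1) := h2

lemma my_gamma_pow (γ : ℕ) (hγ : 1 ≤ γ) (b : ℝ) (hb0 : 0 ≤ b) (hb : b ≤ 1/2) :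
    (γ : ℝ) * b ^ (γ - 1) ≤ 1 := by
  have h1 : b ^ (γ - 1) ≤ (1/2 : ℝ) ^ (γ - 1) := pow_le_pow_left₀ hb0 hb _
  have h2 : (γ : ℝ) ≤ (2 : ℝ) ^ (γ - 1) := by
    exact_mod_cast Nat.cast_le.mpr (my_nat_le_two_pow γ hγ)
  calc (γ : ℝ) * b ^ (γ - 1) ≤ (2 : ℝ) ^ (γ - 1) * (1/2 : ℝ) ^ (γ - 1) :=
        mul_le_mul h2 h1 (pow_nonneg hb0 _) (by positivity)
    _ = 1 := by rw [← mul_pow]; norm_num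

set_option maxHeartbeats 1000000 in
theorem bullets_backward_invariant :
    ∃ ε₀ : ℝ, 0 < ε₀ ∧ ε₀ < 1 ∧ ∀ ε : ℝ, 0 < ε → ε ≤ ε₀ →
      ∀ γ : ℕ, 1 ≤ γ → ∀ p ∈ Bidisk ε, 1 + p.2 ^ 2 ≠ 0 →
        Fmk p ∈ Bullet γ → p ∈ Bullet γ := by
  refine ⟨1/10, by norm_num, by norm_num, ?_⟩
  intro ε hε hε0 γ hγ p hp hden hF
  simp only [Bidisk, Set.mem_setOf_eq] at hp
  simp only [Bullet, Set.mem_setOf_eq] at hF ⊢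
  by_contra hcon
  push_neg at hcon
  set a : ℝ := ‖p.1‖ with ha_def
  set b : ℝ := ‖p.2‖ with hb_def
  set M : ℝ := ‖p.1 + 2 * p.2‖ with hM_def
  set N : ℝ := ‖1 + (p.1 + p.2) ^ 2‖ with hN_def
  set D : ℝ := ‖1 + p.2 ^ 2‖ with hD_def
  have ha0 : 0 ≤ a := norm_nonneg _
  have hb0 : 0 ≤ b := norm_nonneg _
  have hM0 : 0 ≤ M := norm_nonneg _
  have hN0 : 0 ≤ N := norm_nonneg _
  have hD0 : 0 ≤ D := norm_nonneg _
  -- hcon : a < b ^ γ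
  have hb10 : b < 1/10 := lt_of_lt_of_le hp.2 hε0
  have hbγpos : 0 < b ^ γ := lt_of_le_of_lt ha0 hcon
  have hbpos : 0 < b := by
    rcases hb0.lt_or_eq with h | h
    · exact h
    · exfalso; rw [← h, zero_pow (by omega : γ ≠ 0)] at hbγpos; exact lt_irrefl _ hbγpos
  have hb1 : b ≤ 1 := by linarith
  have hbγb : b ^ γ ≤ b := pow_le_of_le_one hb0 hb1 (by omega)
  -- bounds on M, D, N
  have hM3 : M ≤ 3 * b := by
    have h1 : M ≤ a + ‖2 * p.2‖ := norm_add_le _ _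
    have h2 : ‖2 * p.2‖ = 2 * b := by
      rw [norm_mul]; simp [Complex.norm_two, hb_def]
    have : a ≤ b := le_trans hcon.le hbγb
    linarith
  have hD1 : 1 - b ^ 2 ≤ D := by
    have h1 := norm_add_le (1 + p.2 ^ 2) (-(p.2 ^ 2))
    simp only [add_neg_cancel_right] at h1
    rw [norm_one, norm_neg, norm_pow] at h1
    linarith
  have hD2 : D ≤ 1 + b ^ 2 := by
    have h1 := norm_add_le 1 (p.2 ^ 2)
    rw [norm_one, norm_pow] at h1
    linarith
  have hDlb : (99/100 : ℝ) ≤ D := by nlinarith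
  have hDpos : 0 < D := by linarith
  have hNlb : D - 3 * b ^ (γ + 1) ≤ N := by
    have key : (1 : ℂ) + p.2 ^ 2 = (1 + (p.1 + p.2) ^ 2) + -(p.1 * (p.1 + 2 * p.2)) := by ring
    have h1 : D ≤ N + ‖-(p.1 * (p.1 + 2 * p.2))‖ := by
      rw [hD_def, key]; exact norm_add_le _ _
    rw [norm_neg, norm_mul] at h1
    have h2 : a * M ≤ b ^ γ * (3 * b) :=
      mul_le_mul hcon.le hM3 hM0 (le_of_lt hbγpos)
    have h3 : b ^ γ * (3 * b) = 3 * b ^ (γ + 1) := by rw [pow_succ]; ring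
    linarith
  have hc0 : 0 ≤ b ^ (γ + 1) := pow_nonneg hb0 _
  have hbγ1 : b ^ (γ + 1) ≤ b ^ 2 := pow_le_pow_of_le_one hb0 hb1 (by omega)
  have hγb : (γ : ℝ) * b ^ (γ + 1) ≤ b ^ 2 := by
    have hsplit : b ^ (γ + 1) = b ^ 2 * b ^ (γ - 1) := by
      rw [← pow_add]; congr 1; omega
    have hg := my_gamma_pow γ hγ b hb0 (by linarith)
    have hb2nn : (0:ℝ) ≤ b ^ 2 := sq_nonneg b
    calc (γ : ℝ) * b ^ (γ + 1) = b ^ 2 * ((γ : ℝ) * b ^ (γ - 1)) := by rw [hsplit]; ring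
      _ ≤ b ^ 2 * 1 := mul_le_mul_of_nonneg_left hg hb2nn
      _ = b ^ 2 := mul_one _
  have hb2 : b ^ 2 < 1/100 := by nlinarith
  -- N/D lower bound
  have hNDlb : 1 - 4 * b ^ (γ + 1) ≤ N / D := by
    rw [le_div_iff₀ hDpos]
    nlinarith [mul_nonneg hc0 (show (0:ℝ) ≤ D - 3/4 by linarith)]
  have hbase0 : (0 : ℝ) ≤ 1 - 4 * b ^ (γ + 1) := by linarith
  have hquot : (1/2 : ℝ) ≤ (N / D) ^ (2 * γ) := by
    have step1 : (1 - 4 * b ^ (γ + 1)) ^ (2 * γ) ≤ (N / D) ^ (2 * γ) :=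
      pow_le_pow_left₀ hbase0 hNDlb _
    have step2 : 1 + (2 * γ : ℕ) * (-(4 * b ^ (γ + 1))) ≤ (1 + (-(4 * b ^ (γ + 1)))) ^ (2 * γ) := by
      apply one_add_mul_le_pow
      linarith
    have hcast : ((2 * γ : ℕ) : ℝ) = 2 * (γ : ℝ) := by push_cast; ring
    rw [hcast] at step2
    have step3 : (1/2 : ℝ) ≤ 1 + 2 * (γ : ℝ) * (-(4 * b ^ (γ + 1))) := by nlinarith
    have heq : (1 + (-(4 * b ^ (γ + 1)))) ^ (2 * γ) = (1 - 4 * b ^ (γ + 1)) ^ (2 * γ) := by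
      ring_nf
    linarith [step1, step2, step3, heq.le, heq.ge]
  -- rewrite hF
  have e1 : ‖(Fmk p).1‖ = a ^ 2 * (M / D) ^ 2 := by
    simp only [Fmk, norm_mul, norm_pow, norm_div, ha_def, hM_def, hD_def]
  have e2 : ‖(Fmk p).2‖ = b ^ 2 * (N / D) ^ 2 := by
    simp only [Fmk, norm_mul, norm_pow, norm_div, hb_def, hN_def, hD_def]
  rw [e1, e2] at hF
  have hexp : (b ^ 2 * (N / D) ^ 2) ^ γ = b ^ (2 * γ) * (N / D) ^ (2 * γ) := by
    rw [mul_pow, ← pow_mul, ← pow_mul]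
  rw [hexp] at hF
  -- upper bound for RHS
  have ha2 : a ^ 2 < b ^ (2 * γ) := by
    have h := pow_lt_pow_left₀ hcon ha0 two_ne_zero
    rwa [← pow_mul, mul_comm γ 2] at h
  have hb2γpos : 0 < b ^ (2 * γ) := pow_pos hbpos _
  have hRHS : a ^ 2 * (M / D) ^ 2 < b ^ (2 * γ) * (1/2) := by
    have hMD : (M / D) ^ 2 = M ^ 2 / D ^ 2 := div_pow _ _ _
    rw [hMD]
    have hM2 : M ^ 2 ≤ 9 * b ^ 2 := by nlinarith
    have hD2' : (99/100 : ℝ) ^ 2 ≤ D ^ 2 := by nlinarith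
    have s1 : a ^ 2 * M ^ 2 ≤ a ^ 2 * (9 * b ^ 2) :=
      mul_le_mul_of_nonneg_left hM2 (sq_nonneg a)
    have s2 : a ^ 2 * (9 * b ^ 2) ≤ a ^ 2 * (9/100) :=
      mul_le_mul_of_nonneg_left (by linarith) (sq_nonneg a)
    have s3 : a ^ 2 * (9/100 : ℝ) < b ^ (2 * γ) * (9/100) :=
      mul_lt_mul_of_pos_right ha2 (by norm_num)
    have hnum : a ^ 2 * M ^ 2 < b ^ (2 * γ) * (9/100) := by linarith
    rw [div_eq_mul_inv, ← mul_assoc]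
    have hinv : (D ^ 2)⁻¹ ≤ ((99/100 : ℝ) ^ 2)⁻¹ :=
      inv_anti₀ (by norm_num) hD2'
    calc a ^ 2 * M ^ 2 * (D ^ 2)⁻¹ ≤ a ^ 2 * M ^ 2 * ((99/100 : ℝ) ^ 2)⁻¹ :=
          mul_le_mul_of_nonneg_left hinv (by positivity)
      _ < b ^ (2 * γ) * (9/100) * ((99/100 : ℝ) ^ 2)⁻¹ :=
          mul_lt_mul_of_pos_right hnum (by norm_num)
      _ ≤ b ^ (2 * γ) * (1/2) := by
          rw [mul_assoc]
          refine mul_le_mul_of_nonneg_left ?_ (le_of_lt hb2γpos)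
          norm_num
  have hLHS : b ^ (2 * γ) * (1/2) ≤ b ^ (2 * γ) * (N / D) ^ (2 * γ) :=
    mul_le_mul_of_nonneg_left hquot (le_of_lt hb2γpos)
  linarith
end

section
/- There exists ε₀ ∈ (0,1) such that for every ε ∈ (0,ε₀], the bidisk Δ_ε is forward invariant under F and for every integer γ ≥ 1: the set of points p ∈ Δ_ε whose entire forward orbit lies in B_γ (i.e., Fⁿ(p) ∈ B_γ for all n ≥ 0) is exactly L₀ ∩ Δ_ε = {(x,0) : |x| < ε}. -/
open Filter Topology

lemma one_add_abs_lower (z : ℂ) : 1 - ‖z‖ ≤ ‖1 + z‖ := by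
  have t := norm_add_le (1 + z) (-z)
  rw [add_neg_cancel_right] at t
  simp only [norm_one, norm_neg] at t
  linarith

lemma one_add_abs_upper (z : ℂ) : ‖1 + z‖ ≤ 1 + ‖z‖ := by
  have t := norm_add_le 1 z
  simpa using t

set_option maxHeartbeats 1000000 in
lemma Fmk_est {ε : ℝ} (hε : 0 < ε) (hε' : ε ≤ 1/10000) {p : ℂ × ℂ}
    (hx : ‖p.1‖ < ε) (hy : ‖p.2‖ < ε) :
    ‖(Fmk p).1‖ < ε ∧ ‖(Fmk p).2‖ < ε ∧
    ‖(Fmk p).1‖ ≤ 100 * ‖p.1‖ ^ 2 * max (‖p.1‖) (‖p.2‖) ^ 2 ∧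
    ‖p.2‖ ^ 2 / 2 ≤ ‖(Fmk p).2‖ := by
  obtain ⟨x, y⟩ := p
  simp only [Fmk]
  set A := ‖x‖ with hA
  set B := ‖y‖ with hB
  have hA0 : 0 ≤ A := norm_nonneg x
  have hB0 : 0 ≤ B := norm_nonneg y
  set M := max A B with hM
  have hAM : A ≤ M := le_max_left _ _
  have hBM : B ≤ M := le_max_right _ _
  have hMε : M < ε := max_lt hx hy
  have hM0 : 0 ≤ M := le_trans hA0 hAM
  -- denominator
  have hDlow : 1 - B^2 ≤ ‖1 + y^2‖ := by
    have := one_add_abs_lower (y^2)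
    rwa [norm_pow] at this
  have hDup : ‖1 + y^2‖ ≤ 1 + B^2 := by
    have := one_add_abs_upper (y^2)
    rwa [norm_pow] at this
  have hB1 : B ≤ 1 := by linarith only [hy, hε']
  have hBsq : B^2 ≤ B := by nlinarith only [hB0, hB1]
  have hDpos : (1:ℝ)/2 ≤ ‖1 + y^2‖ := by
    linarith only [hDlow, hBsq, hy, hε']
  set D := ‖1 + y^2‖ with hD
  -- numerators
  have hN1 : ‖x + 2*y‖ ≤ A + 2*B := by
    calc ‖x + 2*y‖ ≤ ‖x‖ + ‖2*y‖ := norm_add_le _ _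
    _ = A + 2*B := by rw [norm_mul]; norm_num; rfl
  have hxyab : ‖x+y‖ ≤ A + B := norm_add_le _ _
  have hxy0 : 0 ≤ ‖x+y‖ := norm_nonneg _
  have hu1 : ‖x+y‖ ≤ 1 := by linarith only [hxyab, hx, hy, hε']
  have habsq : ‖x+y‖^2 ≤ A + B := by
    nlinarith only [hxy0, hu1, hxyab]
  have hN2low : 1 - (A+B) ≤ ‖1 + (x+y)^2‖ := by
    have := one_add_abs_lower ((x+y)^2)
    rw [norm_pow] at this
    linarith only [this, habsq]
  have hN2up : ‖1 + (x+y)^2‖ ≤ 1 + (A+B) := by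
    have := one_add_abs_upper ((x+y)^2)
    rw [norm_pow] at this
    nlinarith only [this, habsq, sq_nonneg (‖x+y‖)]
  -- abs of components
  have hx' : ‖x ^ 2 * ((x + 2 * y) / (1 + y ^ 2)) ^ 2‖
      = A^2 * (‖x+2*y‖ / D)^2 := by
    rw [norm_mul, norm_pow, norm_pow, norm_div]
  have hy' : ‖y ^ 2 * ((1 + (x + y) ^ 2) / (1 + y ^ 2)) ^ 2‖
      = B^2 * (‖1+(x+y)^2‖ / D)^2 := by
    rw [norm_mul, norm_pow, norm_pow, norm_div]
  rw [hx', hy']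
  set N1 := ‖x+2*y‖ with hN1d
  set N2 := ‖1+(x+y)^2‖ with hN2d
  have hN10 : 0 ≤ N1 := norm_nonneg _
  have hN20 : 0 ≤ N2 := norm_nonneg _
  have hDpos' : (0:ℝ) < D := by linarith only [hDpos]
  have hN2ge : (9:ℝ)/10 ≤ N2 := by
    linarith only [hN2low, hx, hy, hε']
  have hN2le : N2 ≤ (11:ℝ)/10 := by
    linarith only [hN2up, hx, hy, hε']
  have hDle : D ≤ (11:ℝ)/10 := by linarith only [hDup, hBsq, hy, hε']
  have hDsqL : (1:ℝ)/4 ≤ D^2 := by nlinarith only [hDpos]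
  have hDsqU : D^2 ≤ (121:ℝ)/100 := by nlinarith only [hDle, hDpos'.le]
  have hN2sqL : (81:ℝ)/100 ≤ N2^2 := by nlinarith only [hN2ge]
  have hN2sqU : N2^2 ≤ (121:ℝ)/100 := by nlinarith only [hN2le, hN20]
  have key3 : A^2 * (N1/D)^2 ≤ 100 * A^2 * M^2 := by
    rw [div_pow, ← mul_div_assoc, div_le_iff₀ (by positivity)]
    have hN1M : N1 ≤ 3*M := by linarith only [hN1, hAM, hBM]
    have h9 : N1^2 ≤ 9*M^2 := by nlinarith only [hN1M, hN10, hM0]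
    have h10 : A^2*N1^2 ≤ A^2*(9*M^2) := mul_le_mul_of_nonneg_left h9 (sq_nonneg A)
    have h11 : 0 ≤ A^2*M^2*(100*D^2-9) :=
      mul_nonneg (mul_nonneg (sq_nonneg A) (sq_nonneg M))
        (by linarith only [hDsqL] : (0:ℝ) ≤ 100*D^2-9)
    nlinarith only [h10, h11]
  have hA2 : A^2 ≤ ε^2 := by nlinarith only [hA0, hx]
  have hM2 : M^2 ≤ ε*M := by nlinarith only [hM0, hMε]
  have hcube : 100*ε^3 ≤ 1 := by
    have h := pow_le_pow_left₀ hε.le hε' 3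
    linarith only [h]
  have key1 : A^2 * (N1/D)^2 < ε := by
    have e1 : 100*A^2*M^2 ≤ 100*ε^2*M^2 := by
      nlinarith only [mul_nonneg (sub_nonneg.2 hA2) (sq_nonneg M)]
    have e2 : 100*ε^2*M^2 ≤ 100*ε^2*(ε*M) := by
      nlinarith only [mul_nonneg (sq_nonneg ε) (sub_nonneg.2 hM2)]
    have e3 : 100*ε^2*(ε*M) ≤ M := by
      nlinarith only [mul_nonneg (sub_nonneg.2 hcube) hM0]
    calc A^2 * (N1/D)^2 ≤ 100 * A^2 * M^2 := key3
    _ ≤ M := by linarith only [e1, e2, e3]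
    _ < ε := hMε
  have key4 : B^2/2 ≤ B^2 * (N2/D)^2 := by
    rw [div_pow, ← mul_div_assoc, le_div_iff₀ (by positivity)]
    have h1 : 0 ≤ B^2*(N2^2 - 81/100) := mul_nonneg (sq_nonneg B) (by linarith only [hN2sqL])
    have h2 : 0 ≤ B^2*(121/100 - D^2) := mul_nonneg (sq_nonneg B) (by linarith only [hDsqU])
    nlinarith only [h1, h2, sq_nonneg B]
  have key2 : B^2 * (N2/D)^2 < ε := by
    rw [div_pow, ← mul_div_assoc, div_lt_iff₀ (by positivity)]
    have h1 : 0 ≤ B^2*(121/100 - N2^2) := mul_nonneg (sq_nonneg B) (by linarith only [hN2sqU])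
    have h2 : B^2 ≤ ε*ε := by nlinarith only [hB0, hy]
    have h3 : ε*(1/4) ≤ ε*D^2 := by
      nlinarith only [mul_nonneg hε.le (by linarith only [hDsqL] : (0:ℝ) ≤ D^2 - 1/4)]
    have h4 : ε*ε ≤ ε*(1/10000) := by
      nlinarith only [mul_nonneg hε.le (sub_nonneg.2 hε')]
    nlinarith only [h1, h2, h3, h4, hε]
  exact ⟨key1, key2, key3, key4⟩

theorem backward_bullets_collapse_to_line :
    ∃ ε₀ : ℝ, 0 < ε₀ ∧ ε₀ < 1 ∧ ∀ ε : ℝ, 0 < ε → ε ≤ ε₀ →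
      (∀ p ∈ Bidisk ε, Fmk p ∈ Bidisk ε) ∧
      ∀ γ : ℕ, 1 ≤ γ →
        {p ∈ Bidisk ε | ∀ n : ℕ, Fmk^[n] p ∈ Bullet γ} =
          {p ∈ Bidisk ε | p.2 = 0} := by
  refine ⟨1/10000, by norm_num, by norm_num, ?_⟩
  intro ε hε hε'
  have inv : ∀ p ∈ Bidisk ε, Fmk p ∈ Bidisk ε := by
    intro p hp
    obtain ⟨h1, h2, -, -⟩ := Fmk_est hε hε' hp.1 hp.2
    exact ⟨h1, h2⟩
  refine ⟨inv, ?_⟩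
  intro γ hγ
  have hγR : (1:ℝ) ≤ (γ:ℝ) := by exact_mod_cast hγ
  have hγpos : (0:ℝ) < (γ:ℝ) := by linarith
  ext p
  simp only [Set.mem_setOf_eq, Set.mem_sep_iff]
  constructor
  · rintro ⟨hp, hbul⟩
    refine ⟨hp, ?_⟩
    by_contra hy0
    -- setup
    set q : ℕ → ℂ × ℂ := fun n => Fmk^[n] p with hq
    have hq0 : q 0 = p := rfl
    have hqs : ∀ n, q (n+1) = Fmk (q n) := by
      intro n; simp only [hq, Function.iterate_succ_apply']
    have horb : ∀ n, q n ∈ Bidisk ε := by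
      intro n; induction n with
      | zero => exact hp
      | succ n ih => rw [hqs]; exact inv _ ih
    set s : ℕ → ℝ := fun n => ‖(q n).1‖ with hs
    set t : ℕ → ℝ := fun n => ‖(q n).2‖ with ht
    have hsε : ∀ n, s n < ε := fun n => (horb n).1
    have htε : ∀ n, t n < ε := fun n => (horb n).2
    have key : ∀ n, s (n+1) ≤ 100 * s n ^ 2 * max (s n) (t n) ^ 2 ∧
        t n ^ 2 / 2 ≤ t (n+1) := by
      intro n
      obtain ⟨-, -, h3, h4⟩ := Fmk_est hε hε' (horb n).1 (horb n).2
      rw [← hqs] at h3 h4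
      exact ⟨h3, h4⟩
    have htpos : ∀ n, 0 < t n := by
      intro n; induction n with
      | zero => exact norm_pos_iff.mpr hy0
      | succ n ih =>
        have := (key n).2
        nlinarith only [this, ih]
    have hbull : ∀ n, t n ^ γ ≤ s n := fun n => hbul n
    have hspos : ∀ n, 0 < s n := fun n => lt_of_lt_of_le (pow_pos (htpos n) γ) (hbull n)
    set a : ℕ → ℝ := fun n => -Real.log (s n) with ha
    set b : ℕ → ℝ := fun n => -Real.log (t n) with hb
    have hε1 : ε < 1 := by linarith
    have hapos : ∀ n, 0 < a n := by
      intro n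
      have := Real.log_neg (hspos n) (lt_trans (hsε n) hε1)
      simp only [ha]; linarith
    have hbpos : ∀ n, 0 < b n := by
      intro n
      have := Real.log_neg (htpos n) (lt_trans (htε n) hε1)
      simp only [hb]; linarith
    have hab : ∀ n, a n ≤ (γ:ℝ) * b n := by
      intro n
      have h1 : Real.log (t n ^ γ) ≤ Real.log (s n) :=
        Real.log_le_log (pow_pos (htpos n) γ) (hbull n)
      rw [Real.log_pow] at h1
      simp only [ha, hb]; push_cast at h1 ⊢; linarith
    set K : ℝ := Real.log 100 with hK
    have hKpos : 0 < K := Real.log_pos (by norm_num)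
    have ha0 : 2*K ≤ a 0 := by
      have h1 : Real.log (s 0) < Real.log ε := Real.log_lt_log (hspos 0) (hsε 0)
      have h2 : Real.log ε ≤ Real.log (1/10000) := Real.log_le_log hε hε'
      have h3 : Real.log (1/10000:ℝ) = -(2*K) := by
        rw [one_div, Real.log_inv, show (10000:ℝ) = 100^2 by norm_num, Real.log_pow]
        push_cast; ring
      simp only [ha]; linarith
    set lam : ℝ := 2 + 2/(γ:ℝ) with hlam
    have hlam2 : 2 ≤ lam := by
      rw [hlam]
      have h : 0 < 2/(γ:ℝ) := by positivity
      linarith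
    have hstep_a : ∀ n, lam * a n - K ≤ a (n+1) := by
      intro n
      have hm : (0:ℝ) < max (s n) (t n) := lt_max_of_lt_left (hspos n)
      have h1 : Real.log (s (n+1)) ≤ Real.log (100 * s n ^ 2 * max (s n) (t n) ^ 2) :=
        Real.log_le_log (hspos (n+1)) (key n).1
      rw [Real.log_mul (mul_ne_zero (by norm_num) (pow_ne_zero 2 (hspos n).ne')) (pow_ne_zero 2 hm.ne'),
          Real.log_mul (by norm_num) (pow_ne_zero 2 (hspos n).ne'),
          Real.log_pow, Real.log_pow] at h1
      push_cast at h1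
      have hdivle : 2/(γ:ℝ) ≤ 2 := by
        rw [div_le_iff₀ hγpos]; linarith
      rcases max_cases (s n) (t n) with ⟨hmeq, hcmp⟩ | ⟨hmeq, hcmp⟩
      · rw [hmeq] at h1
        have h2 : a (n+1) ≥ 4 * a n - K := by simp only [ha, hK]; linarith
        have h3 : lam * a n ≤ 4 * a n := by
          have := mul_le_mul_of_nonneg_right hdivle (hapos n).le
          simp only [hlam]; nlinarith only [this]
        linarith
      · rw [hmeq] at h1
        have h2 : a (n+1) ≥ 2 * a n + 2 * b n - K := by simp only [ha, hb, hK]; linarith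
        have h3 : a n / (γ:ℝ) ≤ b n := by
          rw [div_le_iff₀ hγpos]
          have := hab n; nlinarith only [this]
        have h4 : lam * a n = 2 * a n + 2 * (a n / (γ:ℝ)) := by
          rw [hlam]; field_simp
        calc lam * a n - K = 2 * a n + 2 * (a n / (γ:ℝ)) - K := by rw [h4]
        _ ≤ 2 * a n + 2 * b n - K := by linarith only [h3]
        _ ≤ a (n+1) := by linarith only [h2]
    have hstep_b : ∀ n, b (n+1) ≤ 2 * b n + Real.log 2 := by
      intro n
      have h1 : Real.log (t n ^ 2 / 2) ≤ Real.log (t (n+1)) :=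
        Real.log_le_log (div_pos (pow_pos (htpos n) 2) two_pos) (key n).2
      rw [Real.log_div (pow_ne_zero 2 (htpos n).ne') (by norm_num), Real.log_pow] at h1
      push_cast at h1
      simp only [hb]; linarith
    have hgrow_a : ∀ n, K * lam^n ≤ a n - K := by
      intro n; induction n with
      | zero => simp only [pow_zero, mul_one]; linarith only [ha0]
      | succ n ih =>
        have h1 := hstep_a n
        have h2 : lam * (K * lam^n) ≤ lam * (a n - K) :=
          mul_le_mul_of_nonneg_left ih (by linarith)
        have h3 : K * lam^(n+1) = lam * (K * lam^n) := by ring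
        nlinarith only [h1, h2, h3, hKpos, hlam2]
    have hgrow_b : ∀ n, b n + Real.log 2 ≤ 2^n * (b 0 + Real.log 2) := by
      intro n; induction n with
      | zero => simp
      | succ n ih =>
        have h1 := hstep_b n
        have : (2:ℝ)^(n+1) * (b 0 + Real.log 2) = 2 * (2^n * (b 0 + Real.log 2)) := by ring
        linarith
    have hlog2 : (0:ℝ) ≤ Real.log 2 := Real.log_nonneg (by norm_num)
    -- final contradiction
    obtain ⟨n, hn⟩ := pow_unbounded_of_one_lt ((γ:ℝ)*(b 0 + Real.log 2)/K)
      (lt_add_of_pos_right 1 (by positivity : (0:ℝ) < 1/(γ:ℝ)))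
    have chain : K * lam^n ≤ (γ:ℝ) * (2^n * (b 0 + Real.log 2)) := by
      calc K * lam^n ≤ a n - K := hgrow_a n
      _ ≤ a n := by linarith
      _ ≤ (γ:ℝ) * b n := hab n
      _ ≤ (γ:ℝ) * (2^n * (b 0 + Real.log 2)) := by
          refine mul_le_mul_of_nonneg_left ?_ hγpos.le
          linarith [hgrow_b n]
    have hlampow : lam^n = 2^n * (1 + 1/(γ:ℝ))^n := by
      rw [← mul_pow]; congr 1; rw [hlam]; field_simp
    have h2n : (0:ℝ) < 2^n := by positivity
    have hfin : K * (1 + 1/(γ:ℝ))^n ≤ (γ:ℝ) * (b 0 + Real.log 2) := by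
      rw [hlampow] at chain
      have h' : (K * (1 + 1/(γ:ℝ))^n) * 2^n ≤ ((γ:ℝ)*(b 0 + Real.log 2)) * 2^n := by
        linarith only [chain]
      exact le_of_mul_le_mul_right h' h2n
    have hn' : (γ:ℝ)*(b 0 + Real.log 2) < K * (1 + 1/(γ:ℝ))^n := by
      rw [div_lt_iff₀ hKpos] at hn; linarith
    linarith
  · rintro ⟨hp, hy0⟩
    refine ⟨hp, ?_⟩
    intro n
    have h2 : (Fmk^[n] p).2 = 0 := by
      induction n with
      | zero => exact hy0
      | succ n ih =>
        rw [Function.iterate_succ_apply', Fmk, ih]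
        simp
    show ‖(Fmk^[n] p).2‖ ^ γ ≤ ‖(Fmk^[n] p).1‖
    rw [h2, norm_zero, zero_pow (by omega : γ ≠ 0)]
    exact norm_nonneg _
end

section
/- There exists ε₀ ∈ (0,1) such that for all ε, σ with 0 < σ < ε ≤ ε₀ and every integer γ ≥ 1, there exists a positive integer m such that: for every point p in the closed bidisk Δ̄_ε with p ∉ Δ_σ, if Fᵐ(p) ∈ B_γ then p ∈ K^h. -/
open Filter Topology

lemma abs_one_add_ge (w : ℂ) : 1 - ‖w‖ ≤ ‖(1 + w)‖ := by
  have h := norm_add_le (1 + w) (-w)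
  rw [add_neg_cancel_right] at h
  simp only [norm_one, norm_neg] at h
  linarith

lemma abs_one_add_le (w : ℂ) : ‖(1 + w)‖ ≤ 1 + ‖w‖ := by
  simpa using norm_add_le 1 w

lemma real_est {a b r s : ℝ} (ha : 0 ≤ a) (hab : a < b) (hb : b ≤ 1/10)
    (hr0 : 0 ≤ r) (hr : r ≤ 100/33*b) (hs1 : 96/101 ≤ s) (hs2 : s ≤ 104/99) :
    b^2*s^2 ≤ 6/5*b^2 ∧ 9/10*b^2 ≤ b^2*s^2 ∧ a^2*r^2 ≤ 10*a^2*b^2 ∧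
    a^2*r^2 < b^2*s^2 ∧ b^2*s^2 ≤ b := by
  have hbpos : 0 < b := lt_of_le_of_lt ha hab
  have h1 : s^2 ≤ (104/99)^2 := by nlinarith
  have h2 : (96/101)^2 ≤ s^2 := by nlinarith
  have h3 : r^2 ≤ (100/33*b)^2 := by nlinarith
  have hb2 : 0 < b^2 := pow_pos hbpos 2
  refine ⟨by nlinarith, by nlinarith, ?_, ?_, by nlinarith⟩
  · nlinarith [sq_nonneg a, mul_le_mul_of_nonneg_left h3 (sq_nonneg a)]
  · have k1 : a^2*r^2 ≤ a^2*(100/33*b)^2 := mul_le_mul_of_nonneg_left h3 (sq_nonneg a)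
    have k2 : a^2 ≤ 1/100 := by nlinarith
    nlinarith

lemma step_est (p : ℂ × ℂ) (hxy : ‖p.1‖ < ‖p.2‖)
    (hy : ‖p.2‖ ≤ 1/10) :
    ‖(Fmk p).2‖ ≤ 6/5 * ‖p.2‖ ^ 2 ∧
    9/10 * ‖p.2‖ ^ 2 ≤ ‖(Fmk p).2‖ ∧
    ‖(Fmk p).1‖ ≤ 10 * ‖p.1‖ ^ 2 * ‖p.2‖ ^ 2 ∧
    ‖(Fmk p).1‖ < ‖(Fmk p).2‖ ∧
    ‖(Fmk p).2‖ ≤ ‖p.2‖ := by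
  obtain ⟨x, y⟩ := p
  simp only at hxy hy ⊢
  have ha : 0 ≤ ‖x‖ := norm_nonneg x
  have hb : 0 < ‖y‖ := lt_of_le_of_lt ha hxy
  have hF1 : ‖(Fmk (x, y)).1‖
      = ‖x‖ ^ 2 * (‖(x + 2*y)‖ / ‖(1 + y^2)‖) ^ 2 := by
    simp [Fmk, norm_mul, norm_pow, norm_div]
  have hF2 : ‖(Fmk (x, y)).2‖
      = ‖y‖ ^ 2 * (‖(1 + (x + y)^2)‖ / ‖(1 + y^2)‖) ^ 2 := by
    simp [Fmk, norm_mul, norm_pow, norm_div]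
  have hy2 : ‖(y^2)‖ ≤ 1/100 := by
    rw [norm_pow]; nlinarith
  have hxy2 : ‖((x+y)^2)‖ ≤ 1/25 := by
    rw [norm_pow]
    have h1 : ‖(x+y)‖ ≤ 1/5 := le_trans (norm_add_le x y) (by linarith)
    nlinarith [norm_nonneg (x+y)]
  have hB1 : 99/100 ≤ ‖(1 + y^2)‖ := by
    have := abs_one_add_ge (y^2); linarith
  have hB2 : ‖(1 + y^2)‖ ≤ 101/100 := by
    have := abs_one_add_le (y^2); have h0 := norm_nonneg (y^2); linarith
  have hD1 : 96/100 ≤ ‖(1 + (x+y)^2)‖ := by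
    have := abs_one_add_ge ((x+y)^2); linarith
  have hD2 : ‖(1 + (x+y)^2)‖ ≤ 104/100 := by
    have := abs_one_add_le ((x+y)^2)
    have h0 := norm_nonneg ((x+y)^2); linarith
  have hA : ‖(x + 2*y)‖ ≤ 3 * ‖y‖ := by
    have h1 := norm_add_le x (2*y)
    have h2 : ‖(2*y)‖ = 2 * ‖y‖ := by
      simp [norm_mul]
    linarith
  have hBpos : 0 < ‖(1 + y^2)‖ := by linarith
  have hr0 : 0 ≤ ‖(x + 2*y)‖ / ‖(1 + y^2)‖ :=
    div_nonneg (norm_nonneg _) (norm_nonneg _)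
  have hrle : ‖(x + 2*y)‖ / ‖(1 + y^2)‖ ≤ 100/33 * ‖y‖ := by
    rw [div_le_iff₀ hBpos]; nlinarith
  have hs1 : 96/101 ≤ ‖(1 + (x+y)^2)‖ / ‖(1 + y^2)‖ := by
    rw [le_div_iff₀ hBpos]; nlinarith
  have hs2 : ‖(1 + (x+y)^2)‖ / ‖(1 + y^2)‖ ≤ 104/99 := by
    rw [div_le_iff₀ hBpos]; nlinarith
  obtain ⟨e1, e2, e3, e4, e5⟩ := real_est ha hxy hy hr0 hrle hs1 hs2
  rw [hF1, hF2]
  exact ⟨e1, e2, e3, e4, e5⟩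
def eAux : ℕ → ℕ
  | 0 => 0
  | m+1 => 2 * eAux m + 2^m

lemma eAux_two_mul (m : ℕ) : 2 * eAux m = m * 2^m := by
  induction m with
  | zero => rfl
  | succ m ih =>
    calc 2 * eAux (m+1) = 2 * (2 * eAux m) + 2*2^m := by rw [eAux]; ring
    _ = 2 * (m * 2^m) + 2*2^m := by rw [ih]
    _ = (m+1) * 2^(m+1) := by rw [pow_succ]; ring

lemma eAux_eval (K : ℕ) : eAux (2*K) = K * 2^(2*K) := by
  have h := eAux_two_mul (2*K)
  have h2 : (2*K) * 2^(2*K) = 2 * (K * 2^(2*K)) := by ring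
  exact Nat.eq_of_mul_eq_mul_left (by norm_num) (h.trans h2)

lemma orbit (p : ℂ × ℂ) (h1 : ‖p.1‖ < ‖p.2‖)
    (h2 : ‖p.2‖ ≤ 1/10) : ∀ m : ℕ,
    ‖(Fmk^[m] p).1‖ < ‖(Fmk^[m] p).2‖ ∧
    ‖(Fmk^[m] p).2‖ ≤ 1/10 ∧
    ‖(Fmk^[m] p).2‖ ≤ 5/6 * (3/25 : ℝ)^(2^m) := by
  intro m
  induction m with
  | zero =>
    refine ⟨by simpa using h1, by simpa using h2, ?_⟩
    simpa using h2.trans (by norm_num)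
  | succ m ih =>
    obtain ⟨i1, i2, i3⟩ := ih
    obtain ⟨e1, e2, e3, e4, e5⟩ := step_est _ i1 i2
    rw [Function.iterate_succ_apply']
    refine ⟨e4, e5.trans i2, ?_⟩
    have hb0 : (0:ℝ) ≤ ‖(Fmk^[m] p).2‖ := norm_nonneg _
    have hsq : ‖(Fmk^[m] p).2‖ ^ 2 ≤ (5/6 * (3/25 : ℝ)^(2^m))^2 := by
      nlinarith
    have hpow : ((3/25:ℝ)^(2^m))^2 = (3/25:ℝ)^(2^(m+1)) := by
      rw [← pow_mul, pow_succ]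
    calc ‖(Fmk (Fmk^[m] p)).2‖ ≤ 6/5 * ‖(Fmk^[m] p).2‖ ^ 2 := e1
    _ ≤ 6/5 * (5/6 * (3/25 : ℝ)^(2^m))^2 := by linarith
    _ = 5/6 * (3/25:ℝ)^(2^(m+1)) := by rw [mul_pow, hpow]; ring
lemma seq_key (A B : ℕ → ℝ) (q C P₀ : ℝ) (γ : ℕ)
    (hA0 : ∀ m, 0 ≤ A m) (hB0 : ∀ m, 0 < B m)
    (hq0 : 0 < q) (hP0 : 0 ≤ P₀)
    (hCq : C * q^γ ≤ 1)
    (hstepA : ∀ m, A (m+1) ≤ 10 * A m^2 * B m^2)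
    (hstepB : ∀ m, 9/10 * B m^2 ≤ B (m+1))
    (hB2 : ∀ m, B m^2 ≤ q^(2^m))
    (hCval : C = 10*(10/9)^γ)
    (hbase : A 0 ≤ P₀ * B 0^γ) :
    ∀ m, A m * q^(γ*(2^m-1)) ≤ P₀^(2^m) * q^(eAux m) * B m^γ := by
  intro m
  induction m with
  | zero => simpa [eAux] using hbase
  | succ m ih =>
    obtain ⟨s, hs⟩ : ∃ s, 2^m = s+1 :=
      ⟨2^m - 1, by have := Nat.one_le_two_pow (n := m); omega⟩
    have hsub : 2^m - 1 = s := by omega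
    have h2m1 : 2^(m+1) - 1 = 2*s+1 := by rw [pow_succ]; omega
    calc A (m+1) * q^(γ*(2^(m+1)-1))
        ≤ (10*A m^2*B m^2) * q^(γ*(2^(m+1)-1)) :=
          mul_le_mul_of_nonneg_right (hstepA m) (by positivity)
      _ = (10*q^γ) * (A m * q^(γ*s))^2 * B m^2 := by
          rw [h2m1, show γ*(2*s+1) = γ*s+(γ*s+γ) from by ring, pow_add, pow_add]
          ring
      _ ≤ (10*q^γ) * (P₀^(2^m) * q^(eAux m) * B m^γ)^2 * B m^2 := by
          have hih : A m * q^(γ*s) ≤ P₀^(2^m)*q^(eAux m)*B m^γ := by rw [← hsub]; exact ih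
          have h1 : (A m * q^(γ*s))^2 ≤ (P₀^(2^m)*q^(eAux m)*B m^γ)^2 :=
            pow_le_pow_left₀ (mul_nonneg (hA0 m) (by positivity)) hih 2
          exact mul_le_mul_of_nonneg_right
            (mul_le_mul_of_nonneg_left h1 (by positivity)) (by positivity)
      _ = (C*q^γ) * (P₀^(2^m))^2 * ((q^(eAux m))^2 * B m^2) * ((9/10)^γ * (B m^2)^γ) := by
          have hone : ((9:ℝ)/10)^γ * (10/9)^γ = 1 := by rw [← mul_pow]; norm_num
          have hBsw : (B m^2)^γ = (B m^γ)^2 := by rw [← pow_mul, ← pow_mul, Nat.mul_comm]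
          rw [hCval, hBsw]
          linear_combination
            (-(10*q^γ*(P₀^(2^m))^2*(q^(eAux m))^2*(B m^γ)^2*(B m^2))) * hone
      _ ≤ 1 * (P₀^(2^m))^2 * ((q^(eAux m))^2 * q^(2^m)) * ((9/10)^γ * (B m^2)^γ) := by
          have g1 : (C*q^γ) * (P₀^(2^m))^2 ≤ 1 * (P₀^(2^m))^2 :=
            mul_le_mul_of_nonneg_right hCq (by positivity)
          have g2 : (q^(eAux m))^2 * B m^2 ≤ (q^(eAux m))^2 * q^(2^m) :=
            mul_le_mul_of_nonneg_left (hB2 m) (by positivity)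
          have h1 : (C*q^γ) * (P₀^(2^m))^2 * ((q^(eAux m))^2 * B m^2)
              ≤ 1 * (P₀^(2^m))^2 * ((q^(eAux m))^2 * q^(2^m)) := by
            apply mul_le_mul g1 g2 (by positivity) (by positivity)
          exact mul_le_mul_of_nonneg_right h1 (by positivity)
      _ ≤ 1 * (P₀^(2^m))^2 * ((q^(eAux m))^2 * q^(2^m)) * B (m+1)^γ := by
          have hBγ : (9/10:ℝ)^γ * (B m^2)^γ ≤ B (m+1)^γ := by
            rw [← mul_pow]; exact pow_le_pow_left₀ (by positivity) (hstepB m) γ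
          exact mul_le_mul_of_nonneg_left hBγ (by positivity)
      _ = P₀^(2^(m+1)) * q^(eAux (m+1)) * B (m+1)^γ := by
          have e1 : (P₀^(2^m))^2 = P₀^(2^(m+1)) := by rw [← pow_mul, pow_succ]
          have e2 : (q^(eAux m))^2*q^(2^m) = q^(eAux (m+1)) := by
            rw [← pow_mul, ← pow_add]
            congr 1
            show eAux m * 2 + 2^m = eAux (m+1)
            simp [eAux]; ring
          rw [one_mul, e1, e2]

theorem nested_bullets_upper :
    ∃ ε₀ : ℝ, 0 < ε₀ ∧ ε₀ < 1 ∧ ∀ ε σ : ℝ, 0 < σ → σ < ε → ε ≤ ε₀ →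
      ∀ γ : ℕ, 1 ≤ γ → ∃ m : ℕ, 0 < m ∧
        ∀ p ∈ ClosedBidisk ε, p ∉ Bidisk σ → Fmk^[m] p ∈ Bullet γ → p ∈ Khor := by
  refine ⟨1/10, by norm_num, by norm_num, ?_⟩
  intro ε σ hσ hσε hε γ hγ
  have h109 : (1:ℝ) ≤ (10/9)^γ := by
    calc (1:ℝ) = 1^γ := (one_pow γ).symm
    _ ≤ (10/9)^γ := pow_le_pow_left₀ (by norm_num) (by norm_num) γ
  have hC1 : (1:ℝ) ≤ 10 * (10/9)^γ := by nlinarith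
  have hσpow : (0:ℝ) < σ ^ (γ-1) := pow_pos hσ _
  set P₀ : ℝ := 10 * (10/9)^γ / σ ^ (γ-1) with hPdef
  have hP₀ : 0 < P₀ := by positivity
  obtain ⟨N, hN⟩ := pow_unbounded_of_one_lt P₀ (by norm_num : (1:ℝ) < 64)
  refine ⟨2*(γ+N+1), by omega, ?_⟩
  intro p hp hpσ hbul
  by_contra hK
  have hK' : ‖p.1‖ < ‖p.2‖ := by
    simpa [Khor] using hK
  have hpy : ‖p.2‖ ≤ 1/10 := hp.2.trans hε
  have horb := orbit p hK' hpy
  have hbpos : ∀ m : ℕ, 0 < ‖(Fmk^[m] p).2‖ := fun m =>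
    lt_of_le_of_lt (norm_nonneg _) (horb m).1
  have hb0σ : σ ≤ ‖p.2‖ := by
    rcases lt_or_ge (‖p.1‖) σ with h | h
    · by_contra hcon
      push_neg at hcon
      exact hpσ ⟨h, hcon⟩
    · exact h.trans hK'.le
  set q : ℝ := 9/625 with hqdef
  have hq0 : (0:ℝ) < q := by norm_num
  -- hypotheses for seq_key
  have hCq : (10 * (10/9:ℝ)^γ) * q^γ ≤ 1 := by
    have h1 : (10 * (10/9:ℝ)^γ) * q^γ = 10 * (2/125:ℝ)^γ := by
      rw [hqdef, mul_assoc, ← mul_pow]; norm_num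
    rw [h1]
    have h2 : (2/125:ℝ)^γ ≤ (2/125:ℝ)^1 := pow_le_pow_of_le_one (by norm_num) (by norm_num) hγ
    rw [pow_one] at h2
    linarith
  have hstepA : ∀ m, ‖(Fmk^[m+1] p).1‖
      ≤ 10 * ‖(Fmk^[m] p).1‖^2 * ‖(Fmk^[m] p).2‖^2 := by
    intro m
    rw [Function.iterate_succ_apply']
    exact (step_est _ (horb m).1 (horb m).2.1).2.2.1
  have hstepB : ∀ m, 9/10 * ‖(Fmk^[m] p).2‖^2 ≤ ‖(Fmk^[m+1] p).2‖ := by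
    intro m
    rw [Function.iterate_succ_apply']
    exact (step_est _ (horb m).1 (horb m).2.1).2.1
  have hb2q : ∀ m : ℕ, ‖(Fmk^[m] p).2‖ ^ 2 ≤ q ^ (2^m) := by
    intro m
    have h3 := (horb m).2.2
    have hb0' : (0:ℝ) ≤ ‖(Fmk^[m] p).2‖ := norm_nonneg _
    have hpow : ((3/25:ℝ)^(2^m))^2 = q^(2^m) := by
      rw [← pow_mul, mul_comm (2^m) 2, pow_mul]
      norm_num
    nlinarith [pow_nonneg (by norm_num : (0:ℝ) ≤ 3/25) (2^m)]
  have hbase : ‖p.1‖ ≤ P₀ * ‖p.2‖ ^ γ := by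
    rw [hPdef, div_mul_eq_mul_div, le_div_iff₀ hσpow]
    have hb1 : ‖p.1‖ * σ^(γ-1) ≤ ‖p.2‖ * ‖p.2‖^(γ-1) := by
      apply mul_le_mul hK'.le (pow_le_pow_left₀ hσ.le hb0σ _) (by positivity)
        (norm_nonneg _)
    have hb2 : ‖p.2‖ * ‖p.2‖^(γ-1) = ‖p.2‖^γ := by
      rw [← pow_succ']
      congr 1
      omega
    calc ‖p.1‖ * σ^(γ-1) ≤ ‖p.2‖^γ := by rw [← hb2]; exact hb1
    _ ≤ 10 * (10/9)^γ * ‖p.2‖^γ := by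
        nlinarith [pow_nonneg (norm_nonneg p.2) γ]
  have key := seq_key (fun m => ‖(Fmk^[m] p).1‖)
    (fun m => ‖(Fmk^[m] p).2‖) q (10 * (10/9)^γ) P₀ γ
    (fun m => norm_nonneg _) hbpos hq0 hP₀.le hCq hstepA hstepB hb2q rfl
    (by simpa using hbase)
  -- final contradiction
  set M := 2*(γ+N+1) with hM
  have hbul' : ‖(Fmk^[M] p).2‖ ^ γ ≤ ‖(Fmk^[M] p).1‖ := hbul
  have hkey := key M
  have hBMpos : (0:ℝ) < ‖(Fmk^[M] p).2‖ ^ γ := pow_pos (hbpos M) γ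
  have h2 : q ^ (γ*(2^M-1)) ≤ P₀^(2^M) * q^(eAux M) := by
    have h1 : q^(γ*(2^M-1)) * ‖(Fmk^[M] p).2‖ ^ γ
        ≤ (P₀^(2^M) * q^(eAux M)) * ‖(Fmk^[M] p).2‖ ^ γ := by
      calc q^(γ*(2^M-1)) * ‖(Fmk^[M] p).2‖ ^ γ
          ≤ q^(γ*(2^M-1)) * ‖(Fmk^[M] p).1‖ :=
            mul_le_mul_of_nonneg_left hbul' (by positivity)
        _ = ‖(Fmk^[M] p).1‖ * q^(γ*(2^M-1)) := mul_comm _ _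
        _ ≤ P₀^(2^M) * q^(eAux M) * ‖(Fmk^[M] p).2‖ ^ γ := hkey
    exact le_of_mul_le_mul_right h1 hBMpos
  rw [hM, eAux_eval (γ+N+1), ← hM] at h2
  have h3 : q^(γ*2^M) ≤ q^(γ*(2^M-1)) :=
    pow_le_pow_of_le_one hq0.le (by norm_num) (Nat.mul_le_mul_left γ (Nat.sub_le _ _))
  have h4 : (q^γ)^(2^M) ≤ (P₀*q^(γ+N+1))^(2^M) := by
    rw [← pow_mul, mul_pow, ← pow_mul]
    exact le_trans h3 h2
  have h5 : q^γ ≤ P₀*q^(γ+N+1) :=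
    le_of_pow_le_pow_left₀ (by positivity) (by positivity) h4
  have hq64 : q^N ≤ ((1:ℝ)/64)^N := pow_le_pow_left₀ hq0.le (by norm_num) N
  have h7 : P₀ * q^(N+1) < 1 := by
    calc P₀*q^(N+1) = P₀ * q^N * q := by rw [pow_succ]; ring
    _ ≤ P₀ * (1/64)^N * q := by
        exact mul_le_mul_of_nonneg_right (mul_le_mul_of_nonneg_left hq64 hP₀.le) hq0.le
    _ < 64^N * (1/64)^N * q :=
        mul_lt_mul_of_pos_right (mul_lt_mul_of_pos_right hN (by positivity)) hq0
    _ = q := by rw [← mul_pow]; norm_num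
    _ < 1 := by rw [hqdef]; norm_num
  have h6 : P₀*q^(γ+N+1) < q^γ := by
    calc P₀*q^(γ+N+1) = (P₀*q^(N+1))*q^γ := by
          rw [show γ+N+1 = γ+(N+1) from rfl, pow_add]; ring
    _ < 1*q^γ := mul_lt_mul_of_pos_right h7 (pow_pos hq0 γ)
    _ = q^γ := one_mul _
  linarith
end

section
/- There exists ε₀ ∈ (0,1) such that for every ε ∈ (0,ε₀] and every point p ∈ Δ_ε \ B₃, there exist points q ∈ K^h and q' ∈ K^v, both in the domain of F, with F(q) = p and F(q') = p. -/
open Filter Topology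

set_option maxHeartbeats 1000000 in
lemma fmk_key (a v w : ℂ) (hv : 1 + v^2 ≠ 0) (hw : w^2 = a + (1+a)*v^2) :
    Fmk (w - v, v) = (a^2, ((1+a)*v)^2) := by
  unfold Fmk
  dsimp only
  have h1 : (w - v)^2 * ((w - v + 2*v)/(1+v^2))^2 = a^2 := by
    field_simp
    linear_combination (w^2 - v^2 + a + a*v^2) * hw
  have h2 : v^2 * ((1 + (w - v + v)^2)/(1+v^2))^2 = ((1+a)*v)^2 := by
    rw [show w - v + v = w by ring, hw]
    field_simp
    ring
  exact Prod.ext h1 h2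

set_option maxHeartbeats 1000000 in
theorem horizontal_and_vertical_preimages :
    ∃ ε₀ : ℝ, 0 < ε₀ ∧ ε₀ < 1 ∧ ∀ ε : ℝ, 0 < ε → ε ≤ ε₀ →
      ∀ p ∈ Bidisk ε \ Bullet 3,
        (∃ q ∈ Khor, 1 + q.2 ^ 2 ≠ 0 ∧ Fmk q = p) ∧
        (∃ q' ∈ Kver, 1 + q'.2 ^ 2 ≠ 0 ∧ Fmk q' = p) := by
  refine ⟨1/100, by norm_num, by norm_num, ?_⟩
  intro ε hε hεle p hp
  obtain ⟨hpB, hpN⟩ := hp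
  obtain ⟨hx, hy⟩ : ‖p.1‖ < ε ∧ ‖p.2‖ < ε := hpB
  have hnb : ‖p.1‖ < ‖p.2‖ ^ 3 := by
    by_contra h
    exact hpN (by simpa [Bullet] using not_lt.mp h)
  -- basic positivity facts
  set r : ℝ := ‖p.2‖ with hr
  have hrpos : 0 < r := by
    by_contra h
    push_neg at h
    have h0 : r = 0 := le_antisymm h (norm_nonneg p.2)
    rw [h0] at hnb
    norm_num at hnb
    exact absurd hnb (not_lt.mpr (norm_nonneg p.1))
  have hr100 : r < 1/100 := lt_of_lt_of_le hy hεle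
  -- square roots
  obtain ⟨a, ha⟩ := IsAlgClosed.exists_pow_nat_eq p.1 (n := 2) (by norm_num)
  obtain ⟨b, hb⟩ := IsAlgClosed.exists_pow_nat_eq p.2 (n := 2) (by norm_num)
  set t : ℝ := ‖a‖ with ht
  set s : ℝ := ‖b‖ with hs
  have ht0 : 0 ≤ t := norm_nonneg a
  have hs0 : 0 ≤ s := norm_nonneg b
  have hssq : s^2 = r := by rw [hs, hr, ← hb]; rw [norm_pow]
  have htsq : t^2 < r^3 := by
    have : t^2 = ‖p.1‖ := by rw [ht, ← ha, norm_pow]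
    linarith [this ▸ hnb]
  have hspos : 0 < s := by nlinarith
  have hslt : s < 1/10 := by nlinarith
  have hrcube : r^3 < (1/100)^3 := by
    apply pow_lt_pow_left₀ hr100 hrpos.le
    norm_num
  have htlt : t < 1/100 := by nlinarith
  -- 1 + a ≠ 0 and bounds on |1+a|
  have h1a_lb : (1:ℝ)/2 ≤ ‖1 + a‖ := by
    have := norm_add_le (1 + a) (-a)
    simp at this
    linarith
  have h1a_ub : ‖1 + a‖ ≤ 3/2 := by
    have := norm_add_le 1 a
    simp at this
    linarith
  have ha1 : (1:ℂ) + a ≠ 0 := by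
    intro h
    rw [h] at h1a_lb; simp at h1a_lb; linarith
  -- define v
  set v : ℂ := b / (1 + a) with hvdef
  have hveq : (1 + a) * v = b := by
    rw [hvdef]; field_simp
  have habs_veq : ‖1 + a‖ * ‖v‖ = s := by
    rw [← norm_mul, hveq]
  have hv_lb : (2:ℝ)/3 * s ≤ ‖v‖ := by
    nlinarith [norm_nonneg v]
  have hv_ub : ‖v‖ ≤ 2 * s := by
    nlinarith [norm_nonneg v]
  have hvpos : 0 < ‖v‖ := by nlinarith
  have hv_small : ‖v‖ ≤ 1/5 := by nlinarith
  have hv2 : (1:ℂ) + v^2 ≠ 0 := by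
    intro h
    have hv2eq : v^2 = -1 := by linear_combination h
    have : ‖v^2‖ = 1 := by rw [hv2eq]; simp
    rw [norm_pow] at this
    nlinarith
  have h1v2_ub : ‖1 + v^2‖ ≤ 2 := by
    have := norm_add_le 1 (v^2)
    rw [norm_pow] at this
    simp at this
    nlinarith
  -- sqrt w0
  obtain ⟨w0, hw0⟩ := IsAlgClosed.exists_pow_nat_eq (a + (1+a)*v^2) (n := 2) (by norm_num)
  have hw0' : (-w0)^2 = a + (1+a)*v^2 := by rw [neg_pow]; simpa using hw0
  -- sum of the two distances
  have hsum : 2 * ‖v‖ ≤ ‖w0 + v‖ + ‖w0 - v‖ := by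
    have h := norm_add_le (w0 + v) (-(w0 - v))
    have he : (w0 + v) + -(w0 - v) = 2 * v := by ring
    rw [he] at h
    rw [norm_neg] at h
    calc 2 * ‖v‖ = ‖2 * v‖ := by
          rw [norm_mul, Complex.norm_two]
      _ ≤ _ := h
  -- the conversion to p
  have key : ∀ w : ℂ, w^2 = a + (1+a)*v^2 → Fmk (w - v, v) = p := by
    intro w hw
    rw [fmk_key a v w hv2 hw]
    have : ((1+a)*v)^2 = p.2 := by rw [hveq, hb]
    rw [ha, this]
  constructor
  · -- horizontal: choose w with |w - v| ≥ |v|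
    rcases le_or_gt (‖v‖) (‖w0 - v‖) with hc | hc
    · exact ⟨(w0 - v, v), hc, hv2, key w0 hw0⟩
    · refine ⟨(-w0 - v, v), ?_, hv2, key (-w0) hw0'⟩
      show ‖v‖ ≤ ‖-w0 - v‖
      have : ‖-w0 - v‖ = ‖w0 + v‖ := by
        rw [show -w0 - v = -(w0 + v) by ring, norm_neg]
      rw [this]; linarith
  · -- vertical: choose w with |w + v| ≥ |v|, then |w - v| ≤ |v|
    have hvert : ∃ w : ℂ, w^2 = a + (1+a)*v^2 ∧ ‖v‖ ≤ ‖w + v‖ := by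
      rcases le_or_gt (‖v‖) (‖w0 + v‖) with hc | hc
      · exact ⟨w0, hw0, hc⟩
      · refine ⟨-w0, hw0', ?_⟩
        have : ‖-w0 + v‖ = ‖w0 - v‖ := by
          rw [show -w0 + v = -(w0 - v) by ring, norm_neg]
        rw [this]; linarith
    obtain ⟨w, hw, hwv⟩ := hvert
    refine ⟨(w - v, v), ?_, hv2, key w hw⟩
    show ‖w - v‖ ≤ ‖v‖
    have hprod : (w - v) * (w + v) = a * (1 + v^2) := by linear_combination hw
    have habs : ‖w - v‖ * ‖w + v‖ = t * ‖1 + v^2‖ := by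
      rw [← norm_mul, hprod, norm_mul]
    have h2t : 2 * t ≤ (‖v‖)^2 := by
      have hv2lb : (4:ℝ)/9 * r ≤ (‖v‖)^2 := by nlinarith
      nlinarith [pow_pos hrpos 2]
    nlinarith [norm_nonneg (w - v), norm_nonneg (w + v),
      norm_nonneg (1 + v^2)]
end

section
/- There exists ε₀ ∈ (0,1) such that for every ε ∈ (0,ε₀] and every positive integer k, there exist σ > 0 and an integer γ ≥ 1 such that every point p ∈ Δ_σ \ B_γ has a preorbit of length at least k contained in K^v ∩ Δ_ε: there exist points q₁, …, q_k ∈ K^v ∩ Δ_ε with F(q₁) = p and F(q_{i+1}) = q_i for 1 ≤ i < k. -/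
open Filter Topology

private lemma aux64 : ∀ m : ℕ, 3 ≤ m → (64 * m : ℝ) ≤ 3 * 4 ^ m := by
  intro m hm
  induction m with
  | zero => omega
  | succ n ih =>
    rcases Nat.lt_or_ge n 3 with h | h
    · interval_cases n
      · omega
      · omega
      · norm_num
    · have h4 : (64:ℝ) ≤ 4 ^ n := by
        calc (64:ℝ) = 4 ^ 3 := by norm_num
          _ ≤ 4 ^ n := pow_le_pow_right₀ (by norm_num) h
      have h5 := ih (by omega)
      push_cast
      push_cast at h5
      rw [pow_succ]
      nlinarith

set_option maxHeartbeats 1000000 in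
lemma step_lemma (m : ℕ) (hm : 3 ≤ m) (x y : ℂ) (hy0 : 0 < ‖y‖)
    (hy : ‖y‖ ≤ 1/16) (hx : ‖x‖ ≤ 4 * ‖y‖ ^ m) :
    ∃ u v : ℂ, Fmk (u, v) = (x, y) ∧ 0 < ‖v‖ ∧
      ‖v‖ ≤ 2 * Real.sqrt (‖y‖) ∧
      ‖u‖ ≤ ‖v‖ ∧
      ‖u‖ ≤ 4 * ‖v‖ ^ (m - 1) := by
  obtain ⟨a, ha⟩ := IsAlgClosed.exists_pow_nat_eq x (n := 2) (by norm_num)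
  obtain ⟨b, hb⟩ := IsAlgClosed.exists_pow_nat_eq y (n := 2) (by norm_num)
  set A := ‖a‖ with hAdef
  set B := ‖b‖ with hBdef
  have hA0 : 0 ≤ A := norm_nonneg a
  have hB0 : 0 ≤ B := norm_nonneg b
  have hA2 : A ^ 2 = ‖x‖ := by rw [hAdef, ← norm_pow, ha]
  have hB2 : B ^ 2 = ‖y‖ := by rw [hBdef, ← norm_pow, hb]
  have hBpos : 0 < B := by nlinarith
  have hB4 : B ≤ 1/4 := by nlinarith
  have hBm3 : B ^ m ≤ B ^ 3 := pow_le_pow_of_le_one hB0 (by linarith) hm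
  have hBm0 : 0 ≤ B ^ m := pow_nonneg hB0 m
  have hA2' : A ^ 2 ≤ 4 * (B ^ m) ^ 2 := by
    rw [hA2, ← pow_mul, mul_comm m 2, pow_mul, hB2]; exact hx
  have hA : A ≤ 2 * B ^ m := by nlinarith
  have hA32 : A ≤ 1/32 := by nlinarith [pow_le_pow_left₀ hB0 hB4 3]
  -- 1 + a ≠ 0
  have h1a_ub : ‖(1 + a)‖ ≤ 1 + A := by
    simpa using norm_add_le 1 a
  have h1a_lb : 1 - A ≤ ‖(1 + a)‖ := by
    have h := norm_add_le (1 + a) (-a)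
    rw [show (1:ℂ) + a + (-a) = 1 by ring, norm_one, norm_neg] at h
    linarith
  have h1a_ne : (1 : ℂ) + a ≠ 0 := by
    intro h
    rw [h, norm_zero] at h1a_lb
    linarith
  set v : ℂ := b / (1 + a) with hvdef
  have hvb : v * (1 + a) = b := div_mul_cancel₀ b h1a_ne
  set V := ‖v‖ with hVdef
  have hV0 : 0 ≤ V := norm_nonneg v
  have hVeq : V * ‖(1 + a)‖ = B := by rw [hVdef, hBdef, ← norm_mul, hvb]
  have hVpos : 0 < V := by nlinarith
  have hVlb : (32/33) * B ≤ V := by nlinarith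
  have hVub : V ≤ (32/31) * B := by nlinarith
  have hVlb2 : B * (1 - A) ≤ V := by nlinarith
  have hVs : V ≤ 8/31 := by nlinarith
  -- 1 + v^2 ≠ 0
  have hT_ub : ‖(1 + v^2)‖ ≤ 1 + V^2 := by
    have h := norm_add_le 1 (v^2)
    rw [norm_one, norm_pow] at h
    exact h
  have hT_lb : 1 - V^2 ≤ ‖(1 + v^2)‖ := by
    have h := norm_add_le (1 + v^2) (-(v^2))
    rw [show (1:ℂ) + v^2 + (-(v^2)) = 1 by ring, norm_one, norm_neg, norm_pow] at h
    linarith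
  set T := ‖(1 + v^2)‖ with hTdef
  have hT0 : 0 ≤ T := norm_nonneg _
  have h1v_ne : (1 : ℂ) + v^2 ≠ 0 := by
    intro h
    rw [hTdef] at hT_lb
    rw [h, norm_zero] at hT_lb
    nlinarith
  -- the square root w with the good sign
  obtain ⟨w, hw, hwv⟩ : ∃ w : ℂ, w^2 = v^2 + a * (1 + v^2) ∧
      ‖(w - v)‖ ≤ ‖(w + v)‖ := by
    obtain ⟨w₀, hw₀⟩ := IsAlgClosed.exists_pow_nat_eq (v^2 + a * (1 + v^2)) (n := 2) (by norm_num)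
    rcases le_total (‖(w₀ - v)‖) (‖(w₀ + v)‖) with h | h
    · exact ⟨w₀, hw₀, h⟩
    · refine ⟨-w₀, by rw [show (-w₀)^2 = w₀^2 by ring, hw₀], ?_⟩
      rw [show -w₀ - v = -(w₀ + v) by ring, show -w₀ + v = -(w₀ - v) by ring,
        norm_neg, norm_neg]
      exact h
  set u : ℂ := w - v with hudef
  set U := ‖u‖ with hUdef
  have hU0 : 0 ≤ U := norm_nonneg u
  have hK : u * (u + 2*v) = a * (1 + v^2) := by rw [hudef]; linear_combination hw
  have hKabs : U * ‖(u + 2*v)‖ = A * T := by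
    rw [hUdef, hAdef, hTdef, ← norm_mul, ← norm_mul, hK]
  have hwv2 : ‖(u + 2*v)‖ = ‖(w + v)‖ := by
    rw [hudef, show w - v + 2*v = w + v by ring]
  have hwpv : V ≤ ‖(w + v)‖ := by
    have h2v : ‖(2*v)‖ ≤ ‖(w + v)‖ + ‖(w - v)‖ := by
      have h := norm_add_le (w + v) (-(w - v))
      rw [show w + v + (-(w - v)) = 2*v by ring, norm_neg] at h
      linarith
    rw [norm_mul, Complex.norm_two] at h2v
    have : ‖(w - v)‖ ≤ ‖(w + v)‖ := hwv
    linarith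
  have hUV : U * V ≤ A * T := by
    calc U * V ≤ U * ‖(u + 2*v)‖ := by
          rw [hwv2]; exact mul_le_mul_of_nonneg_left hwpv hU0
      _ = A * T := hKabs
  -- numeric bounds
  have hAB : A ≤ B^2/2 := by nlinarith
  have hTub' : T ≤ 15/14 := by nlinarith
  have hUleV : U ≤ V := by
    have hAT : A * T ≤ V * V := by nlinarith
    have := hUV.trans hAT
    exact le_of_mul_le_mul_right (by linarith [mul_le_mul_of_nonneg_left (le_refl V) hU0]) hVpos
  -- Bernoulli bound
  have hBern : 1 - (m:ℝ) * A ≤ (1 - A)^m := by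
    have h := one_add_mul_le_pow (show (-2:ℝ) ≤ -A by linarith) m
    simpa [sub_eq_add_neg, mul_neg] using h
  have hmA : (m:ℝ) * A ≤ 3/32 := by
    have h1 : B ^ m ≤ (1/4:ℝ) ^ m := pow_le_pow_left₀ hB0 hB4 m
    have h2 : (64 * m : ℝ) ≤ 3 * 4 ^ m := aux64 m hm
    have h3 : (0:ℝ) < 4 ^ m := by positivity
    have h4 : ((1:ℝ)/4) ^ m = 1 / 4 ^ m := by rw [div_pow, one_pow]
    have h5 : (m:ℝ) / 4 ^ m ≤ 3 / 64 := by
      rw [div_le_div_iff₀ h3 (by norm_num : (0:ℝ) < 64)]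
      linarith
    have h6 : A ≤ 2 * (1/4:ℝ) ^ m := by linarith
    have h7 : (m:ℝ) * A ≤ (m:ℝ) * (2 * (1/4:ℝ)^m) :=
      mul_le_mul_of_nonneg_left h6 (Nat.cast_nonneg m)
    have h8 : (m:ℝ) * (2 * (1/4:ℝ)^m) = 2 * ((m:ℝ) / 4 ^ m) := by
      rw [h4]; ring
    linarith
  have hVm : (B * (1 - A))^m ≤ V^m :=
    pow_le_pow_left₀ (mul_nonneg hB0 (by linarith)) hVlb2 m
  have hVmlb : (29/32) * B^m ≤ V^m := by
    rw [mul_pow] at hVm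
    have h1 : (29/32:ℝ) ≤ (1-A)^m := by linarith
    have h2 : (29/32) * B^m ≤ B^m * (1-A)^m := by
      calc (29/32) * B^m = B^m * (29/32) := by ring
        _ ≤ B^m * (1-A)^m := mul_le_mul_of_nonneg_left h1 hBm0
    linarith
  have hUm : U ≤ 4 * V ^ (m-1) := by
    have p1 : A * T ≤ (2 * B^m) * (15/14) := mul_le_mul hA hTub' hT0 (by positivity)
    have hAT : A * T ≤ 4 * V^m := by linarith
    have hpow : V^(m-1) * V = V^m := by
      rw [← pow_succ]
      congr 1
      omega
    have hUVm : U * V ≤ (4 * V^(m-1)) * V := by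
      calc U * V ≤ A * T := hUV
        _ ≤ 4 * V^m := hAT
        _ = (4 * V^(m-1)) * V := by rw [← hpow]; ring
    exact le_of_mul_le_mul_right hUVm hVpos
  -- sqrt bound
  have hBs : B = Real.sqrt (‖y‖) := by rw [← hB2, Real.sqrt_sq hB0]
  have hV2s : V ≤ 2 * Real.sqrt (‖y‖) := by rw [← hBs]; linarith
  -- the map identity
  have h2w : (1:ℂ) + w^2 = (1+a) * (1+v^2) := by linear_combination hw
  have hfirst : u ^ 2 * ((u + 2*v) / (1 + v^2)) ^ 2 = x := by
    have e1 : u ^ 2 * ((u + 2*v) / (1 + v^2)) ^ 2 = (u * (u + 2*v) / (1 + v^2)) ^ 2 := by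
      ring
    rw [e1, hK, mul_div_cancel_right₀ a h1v_ne, ha]
  have hsecond : v ^ 2 * ((1 + (u + v)^2) / (1 + v^2)) ^ 2 = y := by
    have e1 : u + v = w := by rw [hudef]; ring
    rw [e1, h2w, mul_div_cancel_right₀ _ h1v_ne]
    calc v^2 * (1+a)^2 = (v * (1+a))^2 := by ring
      _ = b^2 := by rw [hvb]
      _ = y := hb
  refine ⟨u, v, ?_, hVpos, hV2s, hUleV, hUm⟩
  show Fmk (u, v) = (x, y)
  rw [Fmk, Prod.mk.injEq]
  exact ⟨hfirst, hsecond⟩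

lemma chain_lemma (c : ℝ) (hc0 : 0 < c) (hc : c ≤ 1/80) :
    ∀ k : ℕ, 1 ≤ k → ∀ x y : ℂ, 0 < ‖y‖ →
      ‖y‖ ≤ 4 * c ^ (2^k) → ‖x‖ ≤ 4 * ‖y‖ ^ (k+3) →
      ∃ q : ℕ → ℂ × ℂ,
        (∀ i, 1 ≤ i → i ≤ k →
          ‖(q i).1‖ ≤ ‖(q i).2‖ ∧ ‖(q i).2‖ ≤ 4*c) ∧
        Fmk (q 1) = (x, y) ∧
        (∀ i, 1 ≤ i → i < k → Fmk (q (i+1)) = q i) := by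
  have hc1 : c ≤ 1 := by linarith
  intro k
  induction k with
  | zero => omega
  | succ n ih =>
    intro _ x y hy0 hyB hxB
    rcases Nat.eq_zero_or_pos n with hn | hn
    · -- base case : chain of length 1
      subst hn
      have hyB' : ‖y‖ ≤ 4 * c ^ (2^1) := by simpa using hyB
      have hy16 : ‖y‖ ≤ 1/16 := by
        have h1 : c ^ (2:ℕ) ≤ (1/80:ℝ)^(2:ℕ) := pow_le_pow_left₀ hc0.le hc 2
        have h2 : ((2:ℕ)^1) = 2 := by norm_num
        rw [h2] at hyB'
        nlinarith [h1]
      obtain ⟨u, v, hF, hv0, hvs, huv, _⟩ :=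
        step_lemma 4 (by norm_num) x y hy0 hy16 (by simpa using hxB)
      refine ⟨fun _ => (u, v), ?_, hF, ?_⟩
      · intro i h1 h2
        refine ⟨huv, ?_⟩
        have hsq : Real.sqrt (‖y‖) ≤ 2*c := by
          have h1 : ‖y‖ ≤ (2*c)^2 := by
            have h3 : (4:ℝ) * c ^ (2^1) = (2*c)^2 := by ring
            linarith [hyB'.trans_eq h3]
          calc Real.sqrt (‖y‖) ≤ Real.sqrt ((2*c)^2) := Real.sqrt_le_sqrt h1
            _ = 2*c := Real.sqrt_sq (by linarith)
        linarith
      · intro i h1 h2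
        omega
    · -- inductive step
      have hyc2 : ‖y‖ ≤ 4 * c^2 := by
        have : c ^ (2^(n+1)) ≤ c ^ 2 := pow_le_pow_of_le_one (le_of_lt hc0) hc1
          (by have : 2 ≤ 2^(n+1) := by
                calc 2 = 2^1 := rfl
                  _ ≤ 2^(n+1) := Nat.pow_le_pow_right (by norm_num) (by omega)
              exact this)
        linarith
      have hy16 : ‖y‖ ≤ 1/16 := by nlinarith
      obtain ⟨u, v, hF, hv0, hvs, huv, hum⟩ :=
        step_lemma (n+4) (by omega) x y hy0 hy16 (by simpa using hxB)
      have hvB : ‖v‖ ≤ 4 * c ^ (2^n) := by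
        have h1 : ‖y‖ ≤ (2 * c^(2^n))^2 := by
          have : (4:ℝ) * c ^ (2^(n+1)) = (2 * c^(2^n))^2 := by
            rw [pow_succ 2 n, pow_mul]
            ring
          linarith [hyB.trans_eq this]
        have h2 : Real.sqrt (‖y‖) ≤ 2 * c^(2^n) := by
          calc Real.sqrt (‖y‖) ≤ Real.sqrt ((2 * c^(2^n))^2) := Real.sqrt_le_sqrt h1
            _ = 2 * c^(2^n) := Real.sqrt_sq (by positivity)
        linarith
      have hum' : ‖u‖ ≤ 4 * ‖v‖ ^ (n+3) := by
        simpa using hum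
      obtain ⟨q', hq'mem, hq'F, hq'chain⟩ := ih hn u v hv0 hvB hum'
      refine ⟨fun i => if i ≤ 1 then (u, v) else q' (i-1), ?_, ?_, ?_⟩
      · intro i h1 h2
        rcases Nat.lt_or_ge i 2 with h | h
        · have : i = 1 := by omega
          subst this
          simp only [le_refl, if_pos]
          refine ⟨huv, ?_⟩
          have : c ^ (2^n) ≤ c := pow_le_of_le_one (le_of_lt hc0) hc1
            (by positivity)
          linarith
        · have : ¬ (i ≤ 1) := by omega
          simp only [this, if_false]
          exact hq'mem (i-1) (by omega) (by omega)
      · simp only [le_refl, if_pos]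
        exact hF
      · intro i h1 h2
        rcases Nat.lt_or_ge i 2 with h | h
        · have : i = 1 := by omega
          subst this
          simp only [show ¬(1+1 ≤ 1) by omega, if_false, le_refl, if_pos]
          simpa using hq'F
        · have e1 : ¬ (i + 1 ≤ 1) := by omega
          have e2 : ¬ (i ≤ 1) := by omega
          simp only [e1, e2, if_false]
          have := hq'chain (i-1) (by omega) (by omega)
          have e3 : i - 1 + 1 = i := by omega
          rw [e3] at this
          simpa [e3] using this

theorem nested_bullets_vertical_preorbits :
    ∃ ε₀ : ℝ, 0 < ε₀ ∧ ε₀ < 1 ∧ ∀ ε : ℝ, 0 < ε → ε ≤ ε₀ →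
      ∀ k : ℕ, 0 < k → ∃ σ : ℝ, 0 < σ ∧ ∃ γ : ℕ, 1 ≤ γ ∧
        ∀ p ∈ Bidisk σ \ Bullet γ, ∃ q : ℕ → ℂ × ℂ,
          (∀ i : ℕ, 1 ≤ i → i ≤ k → q i ∈ Kver ∩ Bidisk ε) ∧
          Fmk (q 1) = p ∧
          (∀ i : ℕ, 1 ≤ i → i < k → Fmk (q (i + 1)) = q i) := by
  refine ⟨1/16, by norm_num, by norm_num, ?_⟩
  intro ε hε0 hε k hk
  set c : ℝ := ε / 20 with hcdef
  have hc0 : 0 < c := by positivity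
  have hc : c ≤ 1/80 := by rw [hcdef]; linarith
  refine ⟨c ^ (2^k), by positivity, k+3, by omega, ?_⟩
  rintro ⟨px, py⟩ ⟨⟨hp1, hp2⟩, hp3⟩
  simp only [Bullet, Set.mem_setOf_eq, not_le] at hp3
  have hpy0 : 0 < ‖py‖ := by
    by_contra h
    push_neg at h
    have h0 : ‖py‖ = 0 := le_antisymm h (norm_nonneg py)
    rw [h0] at hp3
    simp only [zero_pow (by omega : k+3 ≠ 0)] at hp3
    exact absurd hp3 (not_lt.mpr (norm_nonneg px))
  have hyB : ‖py‖ ≤ 4 * c ^ (2^k) := by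
    have := le_of_lt hp2
    nlinarith [pow_pos hc0 (2^k)]
  have hxB : ‖px‖ ≤ 4 * ‖py‖ ^ (k+3) := by
    have := le_of_lt hp3
    nlinarith [pow_nonneg (norm_nonneg py) (k+3)]
  obtain ⟨q, hqmem, hqF, hqchain⟩ := chain_lemma c hc0 hc k hk px py hpy0 hyB hxB
  refine ⟨q, ?_, hqF, hqchain⟩
  intro i h1 h2
  obtain ⟨hv1, hv2⟩ := hqmem i h1 h2
  refine ⟨hv1, ?_, ?_⟩
  · show ‖(q i).1‖ < ε
    have : 4 * c = ε/5 := by rw [hcdef]; ring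
    linarith
  · show ‖(q i).2‖ < ε
    have : 4 * c = ε/5 := by rw [hcdef]; ring
    linarith
end
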